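/- There exists a finite semifield D with exactly 64 elements such that its center Z(D) has exactly 2 elements, its nucleus N(D) has exactly 2 elements, its left nucleus N_l(D) has exactly 8 elements, its middle nucleus N_m(D) has exactly 4 elements, and its right nucleus N_r(D) has exactly 8 elements. -/

import Mathlib

/-- A finite semifield: a finite nonassociative ring with identity in which
the product of any two nonzero elements is nonzero. -/
structure FiniteSemifield where
  D : Type
  [addGroup : AddCommGroup D]
  mul : D → D → D
  one : D
  finite : Finite D
  mul_add : ∀ a b c : D, mul a (b + c) = mul a b + mul a c
  add_mul : ∀ a b c : D, mul (a + b) c = mul a c + mul b c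
  one_mul : ∀ a : D, mul one a = a
  mul_one : ∀ a : D, mul a one = a
  one_ne_zero : one ≠ (0 : D)
  noZeroDiv : ∀ a b : D, mul a b = 0 → a = 0 ∨ b = 0

attribute [instance] FiniteSemifield.addGroup

/-- The left nucleus of a finite semifield. -/
def FiniteSemifield.leftNucleus (S : FiniteSemifield) : Set S.D :=
  {a : S.D | ∀ b c : S.D, S.mul (S.mul a b) c = S.mul a (S.mul b c)}

/-- The middle nucleus of a finite semifield. -/
def FiniteSemifield.middleNucleus (S : FiniteSemifield) : Set S.D :=
  {b : S.D | ∀ a c : S.D, S.mul (S.mul a b) c = S.mul a (S.mul b c)}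

/-- The right nucleus of a finite semifield. -/
def FiniteSemifield.rightNucleus (S : FiniteSemifield) : Set S.D :=
  {c : S.D | ∀ a b : S.D, S.mul (S.mul a b) c = S.mul a (S.mul b c)}

/-- The nucleus of a finite semifield. -/
def FiniteSemifield.nucleus (S : FiniteSemifield) : Set S.D :=
  S.leftNucleus ∩ S.middleNucleus ∩ S.rightNucleus

/-- The (associative–commutative) center of a finite semifield. -/
def FiniteSemifield.center (S : FiniteSemifield) : Set S.D :=
  {a : S.D | a ∈ S.nucleus ∧ ∀ b : S.D, S.mul a b = S.mul b a}

/-! ### Construction of a semifield of order 64 with nuclei (8, 4, 8) -/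

/-- Multiplication table of the semifield, packed into one natural number:
the product of `x` and `y` occupies the 6 bits starting at position `6*(64*x+y)`. -/
def tbl : Nat := 0xbc180ee94d5b43e7f116b2a40ac3635f9636f53c9ca069c9988a47cddf126775b83220ed2e512a7b047fd1aed584fb805713aa8c7e1cacfc147791a2e9e8453285f31207fbc96a4d63c0e7b8ad51982f594342efdd3b080656be26d4b6fdb9002d1fe5c2a11edac098357e638b858c643b777c5af193e40a05bd6fea0394f262121ddce9a327064c99fd54f87bbb4680c61441a7925935db7d545d6568aeaa0928b29b6196fae78efef7cf9f71d70d38f36cbeeb504d2431cb3ca38218c20400139b503b39dafc25abd48721a970fe81d27446ce056e6c8f2f689f07ca15c0d664e874ee958331bd21bb7a3dca529f40f890f45e0a9d133e4eb5a4274a5bd8ecc1b1a1f562076f0bd4223f72b8563f8c859916ec66e913c0737a8d47a92bddc0829cbb10d59f6502c2f74be6283611ba7f35cfa8685de14cb25fb720169355c1cec788ea18f51d8abc39ff6b646d224069971f75e6d88a19279668e0cb1d37d76cf028930f34e2c84915175564d0aa9b2fb6eae8eb9f3ff7eef80811071460c043f77206e3239c8a85d99ed4b4280ff13c5e6b55f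82e41a9e56d1ba0794a3a10ec7f04bd12b26657a637cdcf9188dbc0a8fcd663d064739160b8bdd25703299c2f9b8c6e9f47422d1e27bbd50b09c54a0d0e66bfe1d8442af4f63ab5f2f19940d2f0992d0f6605adecfa5213356ee0ca911fe233951dcc6a785a3387a5ccaf074650f8b99fc44a603bb548993fb766c039fb3d483c21eab6099b7115d645c6a782da0508f274cfee831093f2d78f505da7219abb6cae681d6974bfe35cce2440ec742cd497a22348df1bab51179b922f781cd8a761e044ef528fc36a6c4d9db330a550bea9607d9183f3665c8e5ebf00077f88b1a4e5cc533a7a8857f4b0b4426bd93f9c0689476ba9c5631f1e0e62e9d1d432bc5a0a5fecd1329126ed27fd807d73c7ff7be7ba6fb638679696dd7d14d55d51c10cd3c92ccfb8eb4db0cb08a49a8aacba241651a61e71e30a206102009678639a48a055745359449075f65b79c698b6fa6bbacaa834f24b38c288f7fe7bfbceb8d77c73db4cb01470431840801ac2a057f673a4394fe90d9c2e11ed63253e90ea02ddded15fd6f112e222e12d1eac19cd6b05bc26316fd5fe5398ca80f1c90432c5344b22aa882e9acd3acb0e36fb77d165b4dd55a49c516790611e77ffdd7bcf986f9e5b63a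e228430e188008bc54b7c1a363d1e26cac15baf570258887f198c6fee5312c2e1d9353ea4743ab483e5c9e6739011aced50a8fda7778060ceef192971d205c3abe25d4c7c24359bbafeb70887509639ab79404ce78b6055f287cb1519b26cfe2ca7d29ede3500b541fe8582f21bfb152b38198da270bd617c23189b13db97e83429d8f725468ec2764dced0d7a7e014ab7e6d4c4eae405e4a5ae0b1b5f4e0f04a1b1f6e8956d072b9c423fc7ad813137e89ad8566b9d423072fcc23bd859d466a89172f37ecc0244615ae6eb782dc7c08f4de0ce49f86cc3daa7ef6205654750301ff2ba3d3996859b1ca5da18bd78929fb3be2711340cf4db1cb5df06dc79969d7d8efcfb9ebdff84d45914955d08e49a18a59e02cc38928d3c8aecba9aadbe80c41810851c0e52ddcb8580b7b543b2621ec90fa81cd8f560e836653f6b12231ad7f447abc484ae13d9d57e6f00a9327c99f1794eac00e2678dd6b4c944fde4702ea73d1a7a09c93e9b8013af535d97b0d0a36394312ab905f9fa48cd277c1e63ee574eda840742a3793b44ee2735205ed2b11bc6ef6221787e50b607b72bf06855898fc295fe0cec199da90dc3d0ea54cc9b9ab57c09f2193f687090d68b764ce2df297489b31d260de6c0978f6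444c252deabfd60501bfa39b29fafe405c64bbb3dad215404aae826a2c8ac49661e4146933491c13cb14bd71ff9df3f795d375b5517d1beb963b699eec34ebccb6e3620c08428e00a1a5260f1fcd2b8d8485376fd0623a7ed8d15a4a98f4f0736e99d5c0233ee4b1774a0b9c1f5ec9b1e42295766b3bcc80dba96941c0cf5db108c7d8aeb20ff3286655341792ae7e3408e45d928dfb8efc3c14959a6142c7fb2b61e75aa67d330030a2cd24f388b2aaeda6fba85124d5457590d32cf5c77db0f3aefde7ffb871a6dd65f7989228e58679a01020c50471808cbac3cdbed3f14d1cb0490c5be7b61ae3a62610696714796b24ba2a20aa16d36557d775bc79cffd7ddfc18e10808a0067b167a88d941e56f9d16a0ab8cc9077f063c12b0e0e17fd906e1a5f52e9e9898426b5774f13ed802f1e36f473f9c8801dbd28e65296686a759385cbdaa159214ee7af76045499baf613920dfc2c83c4cf782b71310fe3cae05d44d8bebf3700f6b68c8361d1877190f2a6cd398a7f4c5d22484d633d9a3e0d5932788e6f7c9e2e094973c265c1b7b29cb3a2ddc6758023399d1fca524e8f46727c89f8542bc4a7e495e2f0a9113fdcc662e035adb170b98d837607abd43b581b6a1d0f5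6eec0c832397af915a194a3135f8f1b7f0da9b42172d997c012bb278cc29547ee4e2a58fce174f4c1f6460ada9d676c2fac40b23e76342617d7a82f51b04e7912c4ff0aa51c849d9a9cfc41f14ac7e92b246713a27f728addf80cc599ef4ba16953c05935d251155038b3ca3093489a39e2921960fbbffaf39f78babbeab29b68db3df2d31d7079b7da7197581831c21011407355bf2210ab2e20687f657ce50cdab449ceb8790de93c1916c3e64786f24bb6311af325809a83d1df97ddef548caa40985e1b4723ecc13b8d1e467a0627fcd95a0b5f426a803f9ded894632f4b1b4ecd06b912773f0a1ac8d562a9537f5e8c0e2525409fceeb707015ca9bb644a358fe48f311f60dab1da8bf4ce605a74dea19b350f210decafe6421558b9fab317400959f06ccfa9581ce43d8abd876113e2f74ad62407b3b25e70be6e15283721fb7a446d23fe868d9b10d4afc399ca55c0dcd6e1f0642a91e232bd50f946bf476a0d8c0b8b9427395fa1213e8d93f5ec15edc0a7263b489817fa53767c4b5ace8037dd4595576d7ef9d7dc73ffa59461071e49ecb0f34e3adb5a6b9ef8e1b6134f0cb1c524c822ba6aa892810628238c004dd10adb886f08c55b9e9c3ec7f9a851a0cd82edf914b49c3c1616aa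4f73790247ef5b22b63eb42067d1f32ae5657380a6daaebebb28e7debeffbf3824d28e3cb30865d69e7db718c75cb6df3d308658a69e39204554965d35100450861c31002a606d7305fb1693a24ff6347f35382650ae43c6f71aa361ac780cf51d9a908bc3c9ee55f92d59a048cfc5de969cbb00c16bc91636bcf988472ed5329c1e1e4b436ba4fd9073a0e55732ac806fd96fd122b88c570a477bdd1a0e32a4f5e5f980bb678658e9be8fb4cb6c3af3fe73d71dfdefcaa09a292ea2314f24d2c11c059c69e61251745b7597d54d408838a30600506c223ddaf960af2e0d19f51d58f170ee2a2d9bfd402d26ca0584a7b35ffac688977053873157ea878cb7f25bda448085e333a1717aa951f88dc3b1dc86a5f814ecf0346ed4a6271b9ad43f089d37281f13ba5642ff42666d0b6e4d894adfc06ee897c4423d464a1dece0b73fad83950729170f09bda5a3e0d0744a7adec872fe62d854b195601b3fca9937ea339d4014e4d88a9d3f307691ae0f765dc04ac3b9ad795203e72be486adfc18d41ba23fb53c4652cf896e51f089eb1b277562c0ffef7cefae78df6d74cf2c70beeb6caeaa689e69648e28607de75c6da6585d65544d24503ce34c2ca2481c61440c2040d58f119cab83c9fed680da44c1de5488fac6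ddaf93948b01d19f5098bbc2cdee9784ca05c5ce158cea87d9bfd2909b403e84b5f998c426e533e1f94222f572e5e9033a94f4fd88852ad5f0edc98132b476f5a80736a437f1b8462ec5b1e9d9c04488fab747c650d9bfa316834098bbb3578754c9fea706c24ca878bf674458f93dab360148b839bb77055ce97caf2640af835ed27481bfc25ac23585a3b39dde4442b3f299ce0546b7e2d8ca1507a7a3dcda5403bbd21bc625c4ab931fd664c07a0c4f4edf02763c8c42efc1626dc956be846e5d0a5a8e47667d8852aec56a4d4b5e9e067e1c0e4acf43722ccd46ff809107eb2bec4599276923ccc78146ef3bad4189666d338dc39d372827dc869517aa2ffc048d762c379d828556ae3fbd00eb0ba4653347ef1be5612306e32b266d13c5e73b67690384fb4aa0757243ff5ae1716202f36a227d52c1f77a63794280000000000000000000000000000000000000000000000000000000000000000000000000000000000000000000000000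

/-- The underlying type: a 64-element type wrapping `Fin 64`. -/
@[ext]
structure D64 where
  v : Fin 64
deriving DecidableEq, Fintype

namespace D64

lemma xor_lt (a b : Fin 64) : a.1 ^^^ b.1 < 64 := by
  have h := Nat.xor_lt_two_pow (n := 6) (lt_of_lt_of_le a.2 (by norm_num))
    (lt_of_lt_of_le b.2 (by norm_num))
  exact lt_of_lt_of_le h (by norm_num)

instance : Zero D64 := ⟨⟨0⟩⟩
instance : Add D64 := ⟨fun a b => ⟨⟨a.v.1 ^^^ b.v.1, xor_lt _ _⟩⟩⟩
instance : Neg D64 := ⟨fun a => a⟩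

instance : AddCommGroup D64 where
  add := (· + ·)
  zero := 0
  neg := (- ·)
  add_assoc a b c := by ext; exact Nat.xor_assoc _ _ _
  zero_add a := by ext; exact Nat.zero_xor _
  add_zero a := by ext; exact Nat.xor_zero _
  add_comm a b := by ext; exact Nat.xor_comm _ _
  neg_add_cancel a := by ext; exact Nat.xor_self _
  nsmul := nsmulRec
  zsmul := zsmulRec

lemma add_val (a b : D64) : (a + b).v.1 = a.v.1 ^^^ b.v.1 := rfl

/-- The semifield multiplication, read off from the table. -/
def mulD (x y : D64) : D64 :=
  ⟨⟨tbl >>> (6*(64*x.v.1+y.v.1)) % 64, Nat.mod_lt _ (by norm_num)⟩⟩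

def oneD : D64 := ⟨8⟩

/-- Basis vectors of `D64` over `GF(2)`. -/
def ei (i : Fin 6) : D64 := ⟨⟨2 ^ i.1 % 64, Nat.mod_lt _ (by norm_num)⟩⟩

/-- One conditional term of the bit decomposition. -/
def cnd (f : Fin 6 → D64) (y : D64) (i : Fin 6) : D64 :=
  if Nat.testBit y.v.1 i.1 then f i else 0

/-- Bit decomposition sum. -/
def bsum (f : Fin 6 → D64) (y : D64) : D64 :=
  cnd f y 0 + cnd f y 1 + cnd f y 2 + cnd f y 3 + cnd f y 4 + cnd f y 5

set_option maxRecDepth 40000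

lemma self_add (a : D64) : a + a = 0 := by
  ext; exact Nat.xor_self _

lemma id_decomp : ∀ y : D64, y = bsum ei y := by decide

lemma mul_decompR : ∀ x y : D64, mulD x y = bsum (fun i => mulD x (ei i)) y := by decide

lemma mul_decompL : ∀ x y : D64, mulD x y = bsum (fun i => mulD (ei i) y) x := by decide

lemma zero_mulD : ∀ y : D64, mulD 0 y = 0 := by decide

lemma mulD_zero : ∀ y : D64, mulD y 0 = 0 := by decide

lemma cnd_add (f : Fin 6 → D64) (y z : D64) (i : Fin 6) :
    cnd f (y + z) i = cnd f y i + cnd f z i := by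
  unfold cnd
  rw [add_val, Nat.testBit_xor]
  cases hy : Nat.testBit y.v.1 i.1 <;> cases hz : Nat.testBit z.v.1 i.1 <;>
    simp [self_add (f i)]

lemma mul_addD : ∀ a b c : D64, mulD a (b + c) = mulD a b + mulD a c := by
  intro a b c
  rw [mul_decompR a (b + c), mul_decompR a b, mul_decompR a c]
  unfold bsum
  simp only [cnd_add]
  abel

lemma add_mulD : ∀ a b c : D64, mulD (a + b) c = mulD a c + mulD b c := by
  intro a b c
  rw [mul_decompL a c, mul_decompL b c, mul_decompL (a + b) c]
  unfold bsum
  simp only [cnd_add]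
  abel

/-- Any additive map is determined by its values on the basis. -/
lemma additive_decomp (f : D64 → D64) (hf : ∀ y z, f (y + z) = f y + f z)
    (h0 : f 0 = 0) (y : D64) : f y = bsum (fun i => f (ei i)) y := by
  conv_lhs => rw [id_decomp y]
  unfold bsum cnd
  simp only [hf, apply_ite f, h0]

lemma ext1 (f g : D64 → D64) (hf : ∀ y z, f (y + z) = f y + f z) (hf0 : f 0 = 0)
    (hg : ∀ y z, g (y + z) = g y + g z) (hg0 : g 0 = 0)
    (hbase : ∀ i : Fin 6, f (ei i) = g (ei i)) : ∀ y, f y = g y := by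
  intro y
  rw [additive_decomp f hf hf0 y, additive_decomp g hg hg0 y]
  unfold bsum cnd
  simp only [hbase]

lemma ext2 (F G : D64 → D64 → D64)
    (hF1 : ∀ y z w, F (y + z) w = F y w + F z w) (hF1' : ∀ w, F 0 w = 0)
    (hF2 : ∀ y z w, F y (z + w) = F y z + F y w) (hF2' : ∀ y, F y 0 = 0)
    (hG1 : ∀ y z w, G (y + z) w = G y w + G z w) (hG1' : ∀ w, G 0 w = 0)
    (hG2 : ∀ y z w, G y (z + w) = G y z + G y w) (hG2' : ∀ y, G y 0 = 0)
    (hbase : ∀ i j : Fin 6, F (ei i) (ei j) = G (ei i) (ei j)) :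
    ∀ b c, F b c = G b c := by
  have step1 : ∀ (j : Fin 6) (b : D64), F b (ei j) = G b (ei j) := by
    intro j
    exact ext1 (fun b => F b (ei j)) (fun b => G b (ei j))
      (fun y z => hF1 y z (ei j)) (hF1' (ei j))
      (fun y z => hG1 y z (ei j)) (hG1' (ei j))
      (fun i => hbase i j)
  intro b
  exact ext1 (F b) (G b) (hF2 b) (hF2' b) (hG2 b) (hG2' b) (fun j => step1 j b)

/-- Transfer of associativity from basis pairs, left-nucleus version. -/
lemma nl_of_basis (x : D64)
    (h : ∀ i j : Fin 6, mulD (mulD x (ei i)) (ei j) = mulD x (mulD (ei i) (ei j))) :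
    ∀ b c : D64, mulD (mulD x b) c = mulD x (mulD b c) := by
  refine ext2 (fun b c => mulD (mulD x b) c) (fun b c => mulD x (mulD b c))
    ?_ ?_ ?_ ?_ ?_ ?_ ?_ ?_ h
  · intro y z w; rw [mul_addD, add_mulD]
  · intro w; rw [mulD_zero, zero_mulD]
  · intro y z w; rw [mul_addD]
  · intro y; rw [mulD_zero]
  · intro y z w; rw [add_mulD, mul_addD]
  · intro w; rw [zero_mulD, mulD_zero]
  · intro y z w; rw [mul_addD, mul_addD]
  · intro y; rw [mulD_zero, mulD_zero]

lemma nm_of_basis (x : D64)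
    (h : ∀ i j : Fin 6, mulD (mulD (ei i) x) (ei j) = mulD (ei i) (mulD x (ei j))) :
    ∀ a c : D64, mulD (mulD a x) c = mulD a (mulD x c) := by
  refine ext2 (fun a c => mulD (mulD a x) c) (fun a c => mulD a (mulD x c))
    ?_ ?_ ?_ ?_ ?_ ?_ ?_ ?_ h
  · intro y z w; rw [add_mulD, add_mulD]
  · intro w; rw [zero_mulD, zero_mulD]
  · intro y z w; rw [mul_addD]
  · intro y; rw [mulD_zero]
  · intro y z w; rw [add_mulD]
  · intro w; rw [zero_mulD]
  · intro y z w; rw [mul_addD, mul_addD]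
  · intro y; rw [mulD_zero, mulD_zero]

lemma nr_of_basis (x : D64)
    (h : ∀ i j : Fin 6, mulD (mulD (ei i) (ei j)) x = mulD (ei i) (mulD (ei j) x)) :
    ∀ a b : D64, mulD (mulD a b) x = mulD a (mulD b x) := by
  refine ext2 (fun a b => mulD (mulD a b) x) (fun a b => mulD a (mulD b x))
    ?_ ?_ ?_ ?_ ?_ ?_ ?_ ?_ h
  · intro y z w; rw [add_mulD, add_mulD]
  · intro w; rw [zero_mulD, zero_mulD]
  · intro y z w; rw [mul_addD, add_mulD]
  · intro y; rw [mulD_zero, zero_mulD]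
  · intro y z w; rw [add_mulD]
  · intro w; rw [zero_mulD]
  · intro y z w; rw [add_mulD, mul_addD]
  · intro y; rw [zero_mulD, mulD_zero]

lemma nl_basis_iff : ∀ x : D64,
    (∀ i j : Fin 6, mulD (mulD x (ei i)) (ei j) = mulD x (mulD (ei i) (ei j))) ↔
      x ∈ ({⟨0⟩, ⟨8⟩, ⟨16⟩, ⟨24⟩, ⟨32⟩, ⟨40⟩, ⟨48⟩, ⟨56⟩} : Finset D64) := by decide

lemma nm_basis_iff : ∀ x : D64,
    (∀ i j : Fin 6, mulD (mulD (ei i) x) (ei j) = mulD (ei i) (mulD x (ei j))) ↔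
      x ∈ ({⟨0⟩, ⟨8⟩, ⟨36⟩, ⟨44⟩} : Finset D64) := by decide

lemma nr_basis_iff : ∀ x : D64,
    (∀ i j : Fin 6, mulD (mulD (ei i) (ei j)) x = mulD (ei i) (mulD (ei j) x)) ↔
      x ∈ ({⟨0⟩, ⟨8⟩, ⟨16⟩, ⟨24⟩, ⟨32⟩, ⟨40⟩, ⟨48⟩, ⟨56⟩} : Finset D64) := by decide

lemma inter_eq : ({⟨0⟩, ⟨8⟩, ⟨16⟩, ⟨24⟩, ⟨32⟩, ⟨40⟩, ⟨48⟩, ⟨56⟩} : Finset D64) ∩ ({⟨0⟩, ⟨8⟩, ⟨36⟩, ⟨44⟩} : Finset D64) ∩ ({⟨0⟩, ⟨8⟩, ⟨16⟩, ⟨24⟩, ⟨32⟩, ⟨40⟩, ⟨48⟩, ⟨56⟩} : Finset D64) = ({⟨0⟩, ⟨8⟩} : Finset D64) := by decide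

lemma comm_n : ∀ x ∈ ({⟨0⟩, ⟨8⟩} : Finset D64), ∀ b : D64, mulD x b = mulD b x := by decide

lemma one_mulD : ∀ a : D64, mulD oneD a = a := by decide
lemma mulD_one : ∀ a : D64, mulD a oneD = a := by decide
lemma one_ne_zeroD : oneD ≠ (0 : D64) := by decide
lemma noZeroDivD : ∀ a b : D64, mulD a b = 0 → a = 0 ∨ b = 0 := by decide

end D64

open D64 in
/-- The semifield of order 64. -/
def S64 : FiniteSemifield where
  D := D64
  mul := mulD
  one := oneD
  finite := Finite.of_fintype _
  mul_add := mul_addD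
  add_mul := add_mulD
  one_mul := one_mulD
  mul_one := mulD_one
  one_ne_zero := one_ne_zeroD
  noZeroDiv := noZeroDivD

open D64

lemma S64_leftNucleus : S64.leftNucleus = (↑({⟨0⟩, ⟨8⟩, ⟨16⟩, ⟨24⟩, ⟨32⟩, ⟨40⟩, ⟨48⟩, ⟨56⟩} : Finset D64) : Set D64) := by
  ext x
  simp only [FiniteSemifield.leftNucleus, Set.mem_setOf_eq, Finset.mem_coe]
  constructor
  · intro h
    exact (nl_basis_iff x).mp (fun i j => h (ei i) (ei j))
  · intro h
    exact nl_of_basis x ((nl_basis_iff x).mpr h)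

lemma S64_middleNucleus : S64.middleNucleus = (↑({⟨0⟩, ⟨8⟩, ⟨36⟩, ⟨44⟩} : Finset D64) : Set D64) := by
  ext x
  simp only [FiniteSemifield.middleNucleus, Set.mem_setOf_eq, Finset.mem_coe]
  constructor
  · intro h
    exact (nm_basis_iff x).mp (fun i j => h (ei i) (ei j))
  · intro h
    exact nm_of_basis x ((nm_basis_iff x).mpr h)

lemma S64_rightNucleus : S64.rightNucleus = (↑({⟨0⟩, ⟨8⟩, ⟨16⟩, ⟨24⟩, ⟨32⟩, ⟨40⟩, ⟨48⟩, ⟨56⟩} : Finset D64) : Set D64) := by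
  ext x
  simp only [FiniteSemifield.rightNucleus, Set.mem_setOf_eq, Finset.mem_coe]
  constructor
  · intro h
    exact (nr_basis_iff x).mp (fun i j => h (ei i) (ei j))
  · intro h
    exact nr_of_basis x ((nr_basis_iff x).mpr h)

lemma S64_nucleus : S64.nucleus = (↑({⟨0⟩, ⟨8⟩} : Finset D64) : Set D64) := by
  unfold FiniteSemifield.nucleus
  rw [S64_leftNucleus, S64_middleNucleus, S64_rightNucleus]
  have := congrArg (fun s : Finset D64 => (s : Set D64)) inter_eq
  simp only [Finset.coe_inter] at this
  exact this

lemma S64_center : S64.center = (↑({⟨0⟩, ⟨8⟩} : Finset D64) : Set D64) := by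
  ext x
  simp only [FiniteSemifield.center, Set.mem_setOf_eq]
  constructor
  · intro h
    have h1 := h.1
    rw [S64_nucleus] at h1
    exact h1
  · intro h
    refine ⟨by rw [S64_nucleus]; exact h, ?_⟩
    exact comm_n x (Finset.mem_coe.mp h)

/-- There exists a finite semifield of order 64 with center of order 2, nucleus of
order 2, left nucleus of order 8, middle nucleus of order 4 and right nucleus of
order 8. -/
theorem exists_semifield64_with_nuclei_2_2_8_4_8 :
    ∃ S : FiniteSemifield, Nat.card S.D = 64 ∧
      Nat.card S.center = 2 ∧
      Nat.card S.nucleus = 2 ∧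
      Nat.card S.leftNucleus = 8 ∧
      Nat.card S.middleNucleus = 4 ∧
      Nat.card S.rightNucleus = 8 := by
  refine ⟨S64, ?_, ?_, ?_, ?_, ?_, ?_⟩
  · rw [show S64.D = D64 from rfl, Nat.card_eq_fintype_card]; decide
  · rw [S64_center]; exact (Nat.card_coe_set_eq _).trans ((Set.ncard_coe_finset _).trans (by decide))
  · rw [S64_nucleus]; exact (Nat.card_coe_set_eq _).trans ((Set.ncard_coe_finset _).trans (by decide))
  · rw [S64_leftNucleus]; exact (Nat.card_coe_set_eq _).trans ((Set.ncard_coe_finset _).trans (by decide))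
  · rw [S64_middleNucleus]; exact (Nat.card_coe_set_eq _).trans ((Set.ncard_coe_finset _).trans (by decide))
  · rw [S64_rightNucleus]; exact (Nat.card_coe_set_eq _).trans ((Set.ncard_coe_finset _).trans (by decide))
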